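/- Let F be a graph with n nodes. Then the k-algebra Q(F) is generated by the elements u(i), i ∈ I_n, together with the elements u(ij), {i,j} ∈ E(F); that is, the smallest unital k-subalgebra of Q(F) containing these elements is Q(F) itself. -/

import Mathlib

/-- Index type for the generators `z_{A,i}` of `Qₙ`: pairs `(A, i)` with
`A ⊆ Iₙ` and `i ∉ A`. -/
abbrev QIdx (n : ℕ) := {p : Finset (Fin n) × Fin n // p.2 ∉ p.1}

/-- The defining relations of the algebra `Qₙ`:
additive relations `z_{A∪{i},j} + z_{A,i} = z_{A∪{j},i} + z_{A,j}` and
multiplicative relations `z_{A∪{i},j} · z_{A,i} = z_{A∪{j},i} · z_{A,j}`. -/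
inductive QnRel (K : Type*) [Field K] (n : ℕ) :
    FreeAlgebra K (QIdx n) → FreeAlgebra K (QIdx n) → Prop
  | add (A : Finset (Fin n)) (i j : Fin n) (hi : i ∉ A) (hj : j ∉ A) (hij : i ≠ j) :
      QnRel K n
        (FreeAlgebra.ι K (⟨(insert i A, j), by simp [Finset.mem_insert, hij.symm, hj]⟩ : QIdx n)
          + FreeAlgebra.ι K (⟨(A, i), hi⟩ : QIdx n))
        (FreeAlgebra.ι K (⟨(insert j A, i), by simp [Finset.mem_insert, hij, hi]⟩ : QIdx n)
          + FreeAlgebra.ι K (⟨(A, j), hj⟩ : QIdx n))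
  | mul (A : Finset (Fin n)) (i j : Fin n) (hi : i ∉ A) (hj : j ∉ A) (hij : i ≠ j) :
      QnRel K n
        (FreeAlgebra.ι K (⟨(insert i A, j), by simp [Finset.mem_insert, hij.symm, hj]⟩ : QIdx n)
          * FreeAlgebra.ι K (⟨(A, i), hi⟩ : QIdx n))
        (FreeAlgebra.ι K (⟨(insert j A, i), by simp [Finset.mem_insert, hij, hi]⟩ : QIdx n)
          * FreeAlgebra.ι K (⟨(A, j), hj⟩ : QIdx n))

/-- The algebra `Qₙ`: the quotient of the free associative unital `K`-algebra on the
generators `z_{A,i}` by the two-sided ideal generated by the defining relations. -/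
abbrev Qn (K : Type*) [Field K] (n : ℕ) := RingQuot (QnRel K n)

/-- The image `z_{A,i}` of a generator in `Qₙ` (junk value `0` if `i ∈ A`). -/
noncomputable def zQ (K : Type*) [Field K] (n : ℕ) (A : Finset (Fin n)) (i : Fin n) : Qn K n :=
  if h : i ∉ A then RingQuot.mkAlgHom K (QnRel K n) (FreeAlgebra.ι K (⟨(A, i), h⟩ : QIdx n))
  else 0

/-- The element `u(A) = Σ_{D ⊆ A \ {i}} (−1)^{|A|−|D|} z_{D,i}` for the choice `i = min A`
(for nonempty `A`), with `u(∅) = 1`. -/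
noncomputable def uQ (K : Type*) [Field K] (n : ℕ) (A : Finset (Fin n)) : Qn K n :=
  if h : A.Nonempty then
    ∑ D ∈ (A.erase (A.min' h)).powerset,
      (-1 : Qn K n) ^ (A.card - D.card) * zQ K n D (A.min' h)
  else 1

/-- The relations defining `Q(F)`: each `u(A)` with nonempty `A ∉ F` is set to `0`. -/
inductive QcRel (K : Type*) [Field K] (n : ℕ) (F : Set (Finset (Fin n))) :
    Qn K n → Qn K n → Prop
  | rel (A : Finset (Fin n)) (hA : A.Nonempty) (hAF : A ∉ F) : QcRel K n F (uQ K n A) 0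

/-- The algebra `Q(F)`: the quotient of `Qₙ` by the two-sided ideal generated by all
`u(A)` with nonempty `A ∉ F`. -/
abbrev Qc (K : Type*) [Field K] (n : ℕ) (F : Set (Finset (Fin n))) := RingQuot (QcRel K n F)

/-- The image of `u(A)` in `Q(F)`. -/
noncomputable def uc (K : Type*) [Field K] (n : ℕ) (F : Set (Finset (Fin n)))
    (A : Finset (Fin n)) : Qc K n F :=
  RingQuot.mkAlgHom K (QcRel K n F) (uQ K n A)

section Aux

variable {R : Type*} [Ring R] {α : Type*} [DecidableEq α]

lemma neg_one_pow_sub' {b d : ℕ} (h : d ≤ b) : (-1 : R) ^ (b - d) = (-1) ^ b * (-1) ^ d := by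
  have h1 : (-1 : R) ^ (b - d) * (-1) ^ d = (-1) ^ b := by
    rw [← pow_add, Nat.sub_add_cancel h]
  have h2 : (-1 : R) ^ d * (-1) ^ d = 1 := by
    rw [← pow_add, ← two_mul, pow_mul, neg_one_sq, one_pow]
  calc (-1 : R) ^ (b - d) = (-1 : R) ^ (b - d) * ((-1) ^ d * (-1) ^ d) := by rw [h2, mul_one]
    _ = (-1 : R) ^ b * (-1) ^ d := by rw [← mul_assoc, h1]

lemma neg_one_pow_sub_succ' {a e : ℕ} (h : e + 1 ≤ a) :
    (-1 : R) ^ (a - (e + 1)) = -(-1 : R) ^ (a - e) := by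
  have : a - e = (a - (e + 1)) + 1 := by omega
  rw [this, pow_succ, mul_neg_one, neg_neg]

lemma neg_one_pow_mul_aux {b d : ℕ} (h : d ≤ b) (x : R) :
    (-1 : R) ^ (b + 1 - d) * x = -((-1) ^ b * ((-1) ^ d * x)) := by
  rw [show b + 1 - d = (b - d) + 1 by omega, pow_succ, neg_one_pow_sub' h]
  noncomm_ring

lemma moebius (A : Finset α) :
    ∀ h : Finset α → R,
      ∑ B ∈ A.powerset, (-1 : R) ^ B.card * ∑ D ∈ B.powerset, (-1 : R) ^ D.card * h D = h A := by
  induction A using Finset.induction_on with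
  | empty => intro h; simp
  | @insert a s ha ih =>
    intro h
    rw [Finset.sum_powerset_insert ha]
    have hterm : ∀ B ∈ s.powerset,
        (-1 : R) ^ B.card * ∑ D ∈ B.powerset, (-1 : R) ^ D.card * h D
          + (-1 : R) ^ (insert a B).card
            * ∑ D ∈ (insert a B).powerset, (-1 : R) ^ D.card * h D
        = (-1 : R) ^ B.card * ∑ D ∈ B.powerset, (-1 : R) ^ D.card * h (insert a D) := by
      intro B hB
      have haB : a ∉ B := fun hc => ha (Finset.mem_powerset.mp hB hc)
      rw [Finset.card_insert_of_notMem haB, Finset.sum_powerset_insert haB]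
      have hD : ∀ D ∈ B.powerset,
          (-1 : R) ^ (insert a D).card * h (insert a D)
            = -((-1 : R) ^ D.card * h (insert a D)) := by
        intro D hD
        have haD : a ∉ D := fun hc => haB (Finset.mem_powerset.mp hD hc)
        rw [Finset.card_insert_of_notMem haD, pow_succ, mul_neg_one, neg_mul]
      rw [Finset.sum_congr rfl hD, Finset.sum_neg_distrib, pow_succ, mul_neg_one]
      set g := ∑ D ∈ B.powerset, (-1 : R) ^ D.card * h D
      set g' := ∑ D ∈ B.powerset, (-1 : R) ^ D.card * h (insert a D)
      noncomm_ring
    rw [← Finset.sum_add_distrib, Finset.sum_congr rfl hterm, ih (fun D => h (insert a D))]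

end Aux

section QnLemmas

variable (K : Type*) [Field K] (n : ℕ)

/-- `u(A)` computed with an arbitrary choice of `i ∈ A`. -/
noncomputable def uQ' (A : Finset (Fin n)) (i : Fin n) : Qn K n :=
  ∑ D ∈ (A.erase i).powerset, (-1 : Qn K n) ^ (A.card - D.card) * zQ K n D i

lemma uQ_eq_uQ' (A : Finset (Fin n)) (h : A.Nonempty) : uQ K n A = uQ' K n A (A.min' h) := by
  rw [uQ, dif_pos h, uQ']

/-- the additive defining relation, in `Qₙ`. -/
lemma z_rel (E : Finset (Fin n)) (i j : Fin n) (hi : i ∉ E) (hj : j ∉ E) (hij : i ≠ j) :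
    zQ K n E i - zQ K n (insert j E) i = zQ K n E j - zQ K n (insert i E) j := by
  have hji : j ∉ insert i E := by simp [Finset.mem_insert, hij.symm, hj]
  have hij' : i ∉ insert j E := by simp [Finset.mem_insert, hij, hi]
  have h := RingQuot.mkAlgHom_rel K (s := QnRel K n) (QnRel.add E i j hi hj hij)
  rw [map_add, map_add] at h
  simp only [zQ]
  rw [dif_pos hi, dif_pos hj, dif_pos hji, dif_pos hij']
  linear_combination (norm := noncomm_ring) h

lemma uQ'_split (A : Finset (Fin n)) (i j : Fin n) (hiA : i ∈ A) (hjA : j ∈ A) (hij : i ≠ j) :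
    uQ' K n A i = ∑ E ∈ ((A.erase i).erase j).powerset,
      (-1 : Qn K n) ^ (A.card - E.card) * (zQ K n E i - zQ K n (insert j E) i) := by
  have hj' : j ∈ A.erase i := Finset.mem_erase.mpr ⟨hij.symm, hjA⟩
  have hjs : j ∉ (A.erase i).erase j := Finset.notMem_erase _ _
  set s := (A.erase i).erase j with hs
  rw [uQ', show A.erase i = insert j s from (Finset.insert_erase hj').symm,
    Finset.sum_powerset_insert hjs, ← Finset.sum_add_distrib]
  refine Finset.sum_congr rfl fun E hE => ?_
  have hEs : E ⊆ s := Finset.mem_powerset.mp hE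
  have hjE : j ∉ E := fun hc => hjs (hEs hc)
  have hcard : E.card + 1 ≤ A.card := by
    have h1 : insert j E ⊆ A.erase i := by
      intro x hx
      rcases Finset.mem_insert.mp hx with rfl | hx
      · exact hj'
      · exact (Finset.erase_subset _ _) (hEs hx)
    have h2 := Finset.card_le_card h1
    have h3 : (A.erase i).card = A.card - 1 := Finset.card_erase_of_mem hiA
    have h4 : 1 ≤ A.card := Finset.card_pos.mpr ⟨i, hiA⟩
    rw [Finset.card_insert_of_notMem hjE] at h2
    omega
  rw [Finset.card_insert_of_notMem hjE, neg_one_pow_sub_succ' hcard, mul_sub,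
    sub_eq_add_neg, ← neg_mul]

lemma uQ'_indep (A : Finset (Fin n)) (i j : Fin n) (hiA : i ∈ A) (hjA : j ∈ A) :
    uQ' K n A i = uQ' K n A j := by
  rcases eq_or_ne i j with rfl | hij
  · rfl
  rw [uQ'_split K n A i j hiA hjA hij, uQ'_split K n A j i hjA hiA hij.symm,
    show (A.erase j).erase i = (A.erase i).erase j from Finset.erase_right_comm]
  refine Finset.sum_congr rfl fun E hE => ?_
  have hEs : E ⊆ (A.erase i).erase j := Finset.mem_powerset.mp hE
  have hiE : i ∉ E := fun hc => Finset.notMem_erase i (A.erase j)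
    (by rw [← Finset.erase_right_comm]; exact hEs hc)
  have hjE : j ∉ E := fun hc => Finset.notMem_erase j (A.erase i) (hEs hc)
  rw [z_rel K n E i j hiE hjE hij]

/-- Möbius inversion: `z_{A,i} = -Σ_{B ⊆ A} u(B ∪ {i})`. -/
lemma z_eq_sum_u (A : Finset (Fin n)) (i : Fin n) (hiA : i ∉ A) :
    ∑ B ∈ A.powerset, uQ' K n (insert i B) i = - zQ K n A i := by
  have hterm : ∀ B ∈ A.powerset,
      uQ' K n (insert i B) i
        = -((-1 : Qn K n) ^ B.card * ∑ D ∈ B.powerset, (-1 : Qn K n) ^ D.card * zQ K n D i) := by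
    intro B hB
    have hiB : i ∉ B := fun hc => hiA (Finset.mem_powerset.mp hB hc)
    rw [uQ', Finset.erase_insert hiB, Finset.card_insert_of_notMem hiB, Finset.mul_sum,
      ← Finset.sum_neg_distrib]
    refine Finset.sum_congr rfl fun D hD => ?_
    have hdb : D.card ≤ B.card := Finset.card_le_card (Finset.mem_powerset.mp hD)
    exact neg_one_pow_mul_aux hdb _
  rw [Finset.sum_congr rfl hterm, Finset.sum_neg_distrib, moebius A (fun D => zQ K n D i)]

end QnLemmas

section QcLemmas

variable (K : Type*) [Field K] (n : ℕ) (F : Set (Finset (Fin n)))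

lemma uc_zero (A : Finset (Fin n)) (hA : A.Nonempty) (hAF : A ∉ F) : uc K n F A = 0 := by
  have h := RingQuot.mkAlgHom_rel K (s := QcRel K n F) (QcRel.rel A hA hAF)
  rw [map_zero] at h
  rw [uc, h]

lemma mkC_uQ' (A : Finset (Fin n)) (i : Fin n) (h : A.Nonempty) (hiA : i ∈ A) :
    RingQuot.mkAlgHom K (QcRel K n F) (uQ' K n A i) = uc K n F A := by
  rw [uc, uQ_eq_uQ' K n A h, uQ'_indep K n A (A.min' h) i (A.min'_mem h) hiA]

end QcLemmas

set_option maxHeartbeats 1000000 in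
/-- For a graph `F`, the algebra `Q(F)` is generated as a unital `K`-algebra by the
elements `u(i)`, `i ∈ Iₙ`, together with the elements `u(ij)` for the edges
`{i,j} ∈ E(F)`. -/
theorem graph_generators (K : Type*) [Field K] (n : ℕ)
    (F : Set (Finset (Fin n)))
    (hFne : ∀ A ∈ F, A.Nonempty)
    (hFsing : ∀ i : Fin n, ({i} : Finset (Fin n)) ∈ F)
    (hFdown : ∀ A ∈ F, ∀ B ⊆ A, B.Nonempty → B ∈ F)
    (hFgr : ∀ A ∈ F, A.card ≤ 2)
 :
    Algebra.adjoin K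
        ((Set.range fun i : Fin n => uc K n F {i}) ∪
          {x : Qc K n F | ∃ i j : Fin n, i ≠ j ∧ ({i, j} : Finset (Fin n)) ∈ F ∧
            x = uc K n F {i, j}}) = ⊤ := by
  set S : Set (Qc K n F) :=
    (Set.range fun i : Fin n => uc K n F {i}) ∪
      {x : Qc K n F | ∃ i j : Fin n, i ≠ j ∧ ({i, j} : Finset (Fin n)) ∈ F ∧
        x = uc K n F {i, j}} with hS
  set mkC := RingQuot.mkAlgHom K (QcRel K n F) with hmkC
  set mkQ := RingQuot.mkAlgHom K (QnRel K n) with hmkQ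
  -- every u(insert i B) lies in the adjoin
  have hu : ∀ (B : Finset (Fin n)) (i : Fin n), i ∉ B →
      uc K n F (insert i B) ∈ Algebra.adjoin K S := by
    intro B i hiB
    by_cases hmem : insert i B ∈ F
    · have hcard := hFgr _ hmem
      rw [Finset.card_insert_of_notMem hiB] at hcard
      rcases B.eq_empty_or_nonempty with rfl | hBne
      · refine Algebra.subset_adjoin (Or.inl ⟨i, ?_⟩)
        simp
      · have hB1 : B.card = 1 :=
          le_antisymm (by omega) (Finset.card_pos.mpr hBne)
        obtain ⟨j, rfl⟩ := Finset.card_eq_one.mp hB1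
        have hij : i ≠ j := fun hc => hiB (by simp [hc])
        exact Algebra.subset_adjoin (Or.inr ⟨i, j, hij, hmem, rfl⟩)
    · rw [uc_zero K n F _ (Finset.insert_nonempty i B) hmem]
      exact zero_mem _
  -- every z lies in the adjoin
  have hz : ∀ (A : Finset (Fin n)) (i : Fin n), i ∉ A →
      mkC (zQ K n A i) ∈ Algebra.adjoin K S := by
    intro A i hiA
    have h2 := congrArg mkC (z_eq_sum_u K n A i hiA)
    rw [map_sum, map_neg] at h2
    have hsum : (∑ B ∈ A.powerset, mkC (uQ' K n (insert i B) i)) ∈ Algebra.adjoin K S := by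
      refine Subalgebra.sum_mem _ fun B hB => ?_
      have hiB : i ∉ B := fun hc => hiA (Finset.mem_powerset.mp hB hc)
      rw [hmkC, mkC_uQ' K n F (insert i B) i (Finset.insert_nonempty i B)
        (Finset.mem_insert_self i B)]
      exact hu B i hiB
    rw [show mkC (zQ K n A i) = -∑ B ∈ A.powerset, mkC (uQ' K n (insert i B) i) from
      by rw [h2]; exact (neg_neg (mkC (zQ K n A i))).symm]
    exact Subalgebra.neg_mem (Algebra.adjoin K S) hsum
  rw [eq_top_iff]
  rintro x -
  obtain ⟨y, rfl⟩ := RingQuot.mkAlgHom_surjective K (QcRel K n F) x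
  obtain ⟨w, rfl⟩ := RingQuot.mkAlgHom_surjective K (QnRel K n) y
  refine FreeAlgebra.induction K (QIdx n)
    (motive := fun w => mkC (mkQ w) ∈ Algebra.adjoin K S) ?_ ?_ ?_ ?_ w
  · intro r
    rw [AlgHom.commutes, AlgHom.commutes]
    exact Subalgebra.algebraMap_mem _ r
  · rintro ⟨⟨A, i⟩, hi⟩
    have hzeq : zQ K n A i = mkQ (FreeAlgebra.ι K (⟨(A, i), hi⟩ : QIdx n)) := dif_pos hi
    rw [← hzeq]
    exact hz A i hi
  · intro a b ha hb
    rw [map_mul, map_mul]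
    exact mul_mem ha hb
  · intro a b ha hb
    rw [map_add, map_add]
    exact add_mem ha hb
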